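/- Let W ⊆ C^ω be M-prefix-independent and M-cycle-consistent for a skeleton M, let m be a state of M, and let Λ, Λ' be nonempty sets of cycles on m. If for every γ' ∈ Λ' there exists γ ∈ Λ such that the combined cycle γγ' is winning on m, then there exists a single γ ∈ Λ such that γγ' is winning on m for all γ' ∈ Λ'. -/
import Mathlib


/-- Concatenation of a finite word with an infinite word. -/
def app {C : Type*} : List C → (ℕ → C) → (ℕ → C)
  | [], w' => w'
  | c :: u, w' => fun i =>
    match i with
    | 0 => c
    | j + 1 => app u w' j

/-- Extension of the update function of a skeleton to finite words. -/
def updStar {C M : Type*} (upd : M → C → M) (m : M) (w : List C) : M :=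
  w.foldl upd m

/-- The infinite word `γ^ω` obtained by repeating a (nonempty) finite word forever. -/
def periodic {C : Type*} [Inhabited C] (γ : List C) : ℕ → C :=
  fun i => γ.getD (i % γ.length) default

/-- The infinite word obtained by concatenating the (nonempty) finite words
`ws 0, ws 1, ws 2, …`. -/
def concatSeq {C : Type*} [Inhabited C] (ws : ℕ → List C) : ℕ → C :=
  fun i => (((List.range (i + 1)).map ws).flatten).getD i default

/-- `W` is `M`-prefix-independent: any two finite words reaching the same state of the
skeleton from the initial state have the same winning continuations. -/
def PrefIndep {C M : Type*} (upd : M → C → M) (init : M) (W : Set (ℕ → C)) : Prop :=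
  ∀ w₁ w₂ : List C, updStar upd init w₁ = updStar upd init w₂ →
    ∀ w' : ℕ → C, (app w₁ w' ∈ W ↔ app w₂ w' ∈ W)

/-- `W` is `M`-cycle-consistent: after any finite word `w`, any infinite concatenation of
winning (resp. losing) cycles on the state reached by `w` yields a winning (resp. losing)
continuation of `w`. -/
def CycleConsistent {C M : Type*} [Inhabited C] (upd : M → C → M) (init : M)
    (W : Set (ℕ → C)) : Prop :=
  ∀ w : List C, ∀ ws : ℕ → List C,
    (∀ k, ws k ≠ [] ∧ updStar upd (updStar upd init w) (ws k) = updStar upd init w) →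
    ((∀ k, app w (periodic (ws k)) ∈ W) → app w (concatSeq ws) ∈ W) ∧
    ((∀ k, app w (periodic (ws k)) ∉ W) → app w (concatSeq ws) ∉ W)

section Helpers

set_option linter.unusedSectionVars false

variable {C : Type*} [Inhabited C]


theorem app_def (u : List C) (v : ℕ → C) (i : ℕ) :
    app u v i = if i < u.length then u.getD i default else v (i - u.length) := by
  induction u generalizing i with
  | nil => simp [app]
  | cons c u ih =>
    cases i with
    | zero => simp [app]
    | succ j => simp [app, ih j, Nat.succ_lt_succ_iff, Nat.succ_sub_succ]

theorem app_append (u u' : List C) (v : ℕ → C) : app (u ++ u') v = app u (app u' v) := by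
  induction u with
  | nil => rfl
  | cons c u ih =>
    funext i
    cases i with
    | zero => rfl
    | succ j => show app (u ++ u') v j = app u (app u' v) j; rw [ih]

def flat (ws : ℕ → List C) (n : ℕ) : List C := ((List.range n).map ws).flatten

theorem flat_succ (ws : ℕ → List C) (n : ℕ) : flat ws (n+1) = flat ws n ++ ws n := by
  simp [flat, List.range_succ]

theorem le_length_flat (ws : ℕ → List C) (h : ∀ k, ws k ≠ []) (n : ℕ) :
    n ≤ (flat ws n).length := by
  induction n with
  | zero => simp
  | succ n ih =>
    rw [flat_succ, List.length_append]
    have := List.length_pos_iff.mpr (h n)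
    omega

theorem flat_prefix (ws : ℕ → List C) {m n : ℕ} (hmn : m ≤ n) :
    flat ws m <+: flat ws n := by
  induction n with
  | zero => rw [Nat.le_zero.mp hmn]
  | succ n ih =>
    rcases Nat.lt_or_ge m (n+1) with h' | h'
    · exact (ih (by omega)).trans (flat_succ ws n ▸ List.prefix_append _ _)
    · rw [Nat.le_antisymm hmn h']

theorem concatSeq_eq (ws : ℕ → List C) (h : ∀ k, ws k ≠ []) {i n : ℕ} (hin : i < n) :
    concatSeq ws i = (flat ws n).getD i default := by
  show (flat ws (i+1)).getD i default = _
  obtain ⟨t, ht⟩ := flat_prefix ws (show i+1 ≤ n by omega)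
  rw [← ht, List.getD_append]
  exact lt_of_lt_of_le (Nat.lt_succ_self i) (le_length_flat ws h (i+1))

theorem app_concatSeq_eq (u : List C) (ws : ℕ → List C) (h : ∀ k, ws k ≠ [])
    {i n : ℕ} (hi : i < u.length + n) :
    app u (concatSeq ws) i = (u ++ flat ws n).getD i default := by
  rw [app_def]
  split
  · rw [List.getD_append _ _ _ _ (by assumption)]
  · rw [concatSeq_eq ws h (show i - u.length < n by omega),
      List.getD_append_right _ _ _ _ (by omega)]

theorem updStar_append {M : Type*} (upd : M → C → M) (m : M) (u v : List C) :
    updStar upd m (u ++ v) = updStar upd (updStar upd m u) v := by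
  simp [updStar, List.foldl_append]

theorem periodic_rotate (γ γ' : List C) :
    periodic (γ ++ γ') = app γ (periodic (γ' ++ γ)) := by
  funext i
  rw [app_def]
  unfold periodic
  rw [List.length_append, List.length_append]
  set L := γ.length + γ'.length with hL
  rcases Nat.eq_zero_or_pos L with h0 | hLpos
  · have hγ : γ = [] := List.length_eq_zero_iff.mp (by omega)
    have hγ' : γ' = [] := List.length_eq_zero_iff.mp (by omega)
    subst hγ; subst hγ'; simp
  split
  · next hlt =>
    rw [Nat.mod_eq_of_lt (by omega), List.getD_append _ _ _ _ hlt]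
  · next hge =>
    push_neg at hge
    set j := i - γ.length with hj
    set r := j % L with hr
    have hrL : r < L := Nat.mod_lt _ hLpos
    have hiL : i % L = (γ.length + r) % L := by
      have : i = γ.length + r + L * (j / L) := by
        have := Nat.div_add_mod j L
        omega
      rw [this, Nat.mul_comm, Nat.add_mul_mod_self_right]
    have hcomm : γ'.length + γ.length = L := by omega
    rcases Nat.lt_or_ge r γ'.length with hr' | hr'
    · rw [hiL, Nat.mod_eq_of_lt (by omega),
        List.getD_append_right _ _ _ _ (Nat.le_add_right _ _), Nat.add_sub_cancel_left,
        hcomm, List.getD_append _ _ _ _ hr']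
    · have hs : r - γ'.length < γ.length := by omega
      rw [hiL, show γ.length + r = (r - γ'.length) + L by omega,
        Nat.add_mod_right, Nat.mod_eq_of_lt (by omega),
        List.getD_append _ _ _ _ hs, hcomm,
        List.getD_append_right _ _ _ _ (by omega)]

theorem key_eq (w : List C) (a b : ℕ → List C) (n : ℕ) :
    (w ++ a 0) ++ flat (fun k => b k ++ a (k+1)) n
      = (w ++ flat (fun k => a k ++ b k) n) ++ a n := by
  induction n with
  | zero => simp [flat]
  | succ n ih => rw [flat_succ, flat_succ, ← List.append_assoc, ih]; simp

theorem app_eq_app (w : List C) (a b : ℕ → List C)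
    (ha : ∀ k, a k ≠ []) (hb : ∀ k, b k ≠ []) :
    app w (concatSeq fun k => a k ++ b k)
      = app (w ++ a 0) (concatSeq fun k => b k ++ a (k+1)) := by
  have hne : ∀ k, a k ++ b k ≠ [] := fun k => by simp [ha k]
  have hne' : ∀ k, b k ++ a (k+1) ≠ [] := fun k => by simp [hb k]
  funext i
  rw [app_concatSeq_eq w _ hne (show i < w.length + (i+1) by omega),
    app_concatSeq_eq (w ++ a 0) _ hne' (show i < (w ++ a 0).length + (i+1) by omega),
    key_eq]
  refine (List.getD_append _ _ _ _ ?_).symm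
  rw [List.length_append]
  have := le_length_flat (fun k => a k ++ b k) hne (i+1)
  omega

end Helpers

/-- if every cycle of `Λ'` can be made winning by prepending some cycle of
`Λ`, then a single cycle of `Λ` makes all cycles of `Λ'` winning. -/
theorem stmt4 {C M : Type*} [Inhabited C] [Finite M]
    (upd : M → C → M) (init : M) (W : Set (ℕ → C))
    (hpi : PrefIndep upd init W) (hcc : CycleConsistent upd init W)
    (m : M) (w : List C) (hw : updStar upd init w = m)
    (Λ Λ' : Set (List C)) (hΛne : Λ.Nonempty) (hΛ'ne : Λ'.Nonempty)
    (hΛ : ∀ γ ∈ Λ, γ ≠ [] ∧ updStar upd m γ = m)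
    (hΛ' : ∀ γ' ∈ Λ', γ' ≠ [] ∧ updStar upd m γ' = m)
    (h : ∀ γ' ∈ Λ', ∃ γ ∈ Λ, app w (periodic (γ ++ γ')) ∈ W) :
    ∃ γ ∈ Λ, ∀ γ' ∈ Λ', app w (periodic (γ ++ γ')) ∈ W := by
  classical
  by_contra hcon
  push_neg at hcon
  obtain ⟨γ₀, hγ₀⟩ := hΛne
  have hF : ∀ γ : {x // x ∈ Λ}, ∃ p : {x // x ∈ Λ} × {x // x ∈ Λ'},
      app w (periodic (γ.1 ++ p.2.1)) ∉ W ∧ app w (periodic (p.1.1 ++ p.2.1)) ∈ W := by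
    rintro ⟨γ, hγ⟩
    obtain ⟨γ', hγ', hlose⟩ := hcon γ hγ
    obtain ⟨δ, hδ, hwin⟩ := h γ' hγ'
    exact ⟨(⟨δ, hδ⟩, ⟨γ', hγ'⟩), hlose, hwin⟩
  choose F hF1 hF2 using hF
  let seq : ℕ → {x // x ∈ Λ} := fun k => Nat.rec ⟨γ₀, hγ₀⟩ (fun _ s => (F s).1) k
  set a : ℕ → List C := fun k => (seq k).1 with ha_def
  set b : ℕ → List C := fun k => ((F (seq k)).2).1 with hb_def
  have haΛ : ∀ k, a k ∈ Λ := fun k => (seq k).2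
  have hbΛ' : ∀ k, b k ∈ Λ' := fun k => ((F (seq k)).2).2
  have hane : ∀ k, a k ≠ [] := fun k => (hΛ _ (haΛ k)).1
  have hbne : ∀ k, b k ≠ [] := fun k => (hΛ' _ (hbΛ' k)).1
  have hsucc : ∀ k, a (k+1) = ((F (seq k)).1).1 := fun k => rfl
  have hlose : ∀ k, app w (periodic (a k ++ b k)) ∉ W := fun k => hF1 (seq k)
  have hwin : ∀ k, app w (periodic (a (k+1) ++ b k)) ∈ W := fun k => by
    rw [hsucc k]; exact hF2 (seq k)
  have hreach : ∀ γ, γ ∈ Λ → updStar upd init (w ++ γ) = m := fun γ hγ => by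
    rw [updStar_append, hw, (hΛ γ hγ).2]
  -- the infinite word is losing
  have hyp1 : ∀ k, a k ++ b k ≠ [] ∧
      updStar upd (updStar upd init w) (a k ++ b k) = updStar upd init w := by
    intro k
    refine ⟨by simp [hane k], ?_⟩
    rw [hw, updStar_append, (hΛ _ (haΛ k)).2, (hΛ' _ (hbΛ' k)).2]
  have hLlose : app w (concatSeq fun k => a k ++ b k) ∉ W :=
    (hcc w (fun k => a k ++ b k) hyp1).2 hlose
  -- the infinite word is winning
  have hyp2 : ∀ k, b k ++ a (k+1) ≠ [] ∧
      updStar upd (updStar upd init (w ++ a 0)) (b k ++ a (k+1)) =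
        updStar upd init (w ++ a 0) := by
    intro k
    refine ⟨by simp [hbne k], ?_⟩
    rw [hreach _ (haΛ 0), updStar_append, (hΛ' _ (hbΛ' k)).2, (hΛ _ (haΛ (k+1))).2]
  have hwin' : ∀ k, app (w ++ a 0) (periodic (b k ++ a (k+1))) ∈ W := by
    intro k
    have hk := hwin k
    rw [periodic_rotate, ← app_append] at hk
    exact (hpi (w ++ a 0) (w ++ a (k+1))
      (by rw [hreach _ (haΛ 0), hreach _ (haΛ (k+1))]) _).mpr hk
  have hWwin : app (w ++ a 0) (concatSeq fun k => b k ++ a (k+1)) ∈ W :=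
    (hcc (w ++ a 0) (fun k => b k ++ a (k+1)) hyp2).1 hwin'
  rw [app_eq_app w a b hane hbne] at hLlose
  exact hLlose hWwin
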